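/- Let p be a probability distribution on {0,1}^{2n} and R_p the induced Pauli channel R_p(ρ) = ∑_{(a,b)} p(a,b) XᵃZᵇ ρ Zᵇ Xᵃ. If R_p is ε-randomizing in trace norm, then for every n×2n matrix M over GF(2) representing n independent commuting Pauli generators of a stabilizer state, the distribution of M·V (V distributed as p, M·V the vector of symplectic inner products) is within ℓ₁ distance ε of the uniform distribution on {0,1}ⁿ. -/

import Mathlib

open Matrix ComplexOrder

/-- The trace norm (sum of singular values) of a complex square matrix. -/
noncomputable def traceNorm {n : Type*} [Fintype n] [DecidableEq n] (M : Matrix n n ℂ) : ℝ :=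
  ((Matrix.posSemidef_conjTranspose_mul_self M).1.eigenvectorUnitary.1 *
    diagonal (((↑) : ℝ → ℂ) ∘ (Real.sqrt ∘ (Matrix.posSemidef_conjTranspose_mul_self M).1.eigenvalues)) *
    (star (Matrix.posSemidef_conjTranspose_mul_self M).1.eigenvectorUnitary :
      Matrix n n ℂ)).trace.re

/-- The Frobenius (Hilbert–Schmidt) norm of a complex square matrix. -/
noncomputable def frobNorm {n : Type*} [Fintype n] (M : Matrix n n ℂ) : ℝ :=
  Real.sqrt ((Mᴴ * M).trace.re)

/-- Mod-2 scalar product data: the number of positions where both bit strings are 1. -/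
def bdot {n : ℕ} (a b : Fin n → Bool) : ℕ :=
  (Finset.univ.filter fun i => a i = true ∧ b i = true).card

/-- `Xᵃ = X^{a₁} ⊗ ⋯ ⊗ X^{aₙ}`: the tensor product of Pauli X's selected by `a`,
as a matrix in the computational basis indexed by `Fin n → Bool`. -/
def XMat {n : ℕ} (a : Fin n → Bool) : Matrix (Fin n → Bool) (Fin n → Bool) ℂ :=
  Matrix.of fun s t => if s = fun i => xor (a i) (t i) then 1 else 0

/-- `Zᵇ = Z^{b₁} ⊗ ⋯ ⊗ Z^{bₙ}`: the tensor product of Pauli Z's selected by `b`. -/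
def ZMat {n : ℕ} (b : Fin n → Bool) : Matrix (Fin n → Bool) (Fin n → Bool) ℂ :=
  Matrix.diagonal fun t => (-1 : ℂ) ^ bdot b t

/-- The symplectic inner product of the `2n`-bit strings `(a,b)` and `(c,d)`:
`⟨a,d⟩ + ⟨b,c⟩ mod 2`. -/
def sympB {n : ℕ} (p q : (Fin n → Bool) × (Fin n → Bool)) : ZMod 2 :=
  ((bdot p.1 q.2 + bdot p.2 q.1 : ℕ) : ZMod 2)

/-- `M·w`: the vector of symplectic inner products of the rows `g k` of the generator
matrix with the string `w`. -/
def Msymp {n : ℕ} (g : Fin n → (Fin n → Bool) × (Fin n → Bool))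
    (w : (Fin n → Bool) × (Fin n → Bool)) : Fin n → ZMod 2 :=
  fun k => sympB (g k) w

/-- The `2n`-bit string `(a,b)` viewed as a vector over `GF(2)`. -/
def toRow {n : ℕ} (q : (Fin n → Bool) × (Fin n → Bool)) :
    (Fin n → ZMod 2) × (Fin n → ZMod 2) :=
  ((fun i => if q.1 i then 1 else 0), (fun i => if q.2 i then 1 else 0))

namespace Rand

variable {n : ℕ}

def bxor {n : ℕ} (a b : Fin n → Bool) : Fin n → Bool := fun i => xor (a i) (b i)

def b0 {n : ℕ} : Fin n → Bool := fun _ => false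

lemma bxor_self (a : Fin n → Bool) : bxor a a = b0 := by
  funext i; simp [bxor, b0]

lemma bxor_comm (a b : Fin n → Bool) : bxor a b = bxor b a := by
  funext i; simp [bxor, Bool.xor_comm]

lemma bdot_comm (a b : Fin n → Bool) : bdot a b = bdot b a := by
  unfold bdot; congr 1; ext i; simp [and_comm]

lemma neg_one_pow_bdot (b t : Fin n → Bool) :
    (-1 : ℂ) ^ bdot b t = ∏ i, (if b i = true ∧ t i = true then (-1 : ℂ) else 1) := by
  rw [bdot, ← Finset.prod_const, ← Finset.prod_filter]

lemma bdot_parity (b x y : Fin n → Bool) :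
    (-1 : ℂ) ^ bdot b (bxor x y) = (-1) ^ bdot b x * (-1) ^ bdot b y := by
  rw [neg_one_pow_bdot, neg_one_pow_bdot, neg_one_pow_bdot, ← Finset.prod_mul_distrib]
  refine Finset.prod_congr rfl fun i _ => ?_
  cases hb : b i <;> cases hx : x i <;> cases hy : y i <;> simp [bxor, hb, hx, hy]

lemma bdot_parity' (b d t : Fin n → Bool) :
    (-1 : ℂ) ^ bdot (bxor b d) t = (-1) ^ bdot b t * (-1) ^ bdot d t := by
  rw [bdot_comm, bdot_parity, bdot_comm t b, bdot_comm t d]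

lemma bdot_b0 (a : Fin n → Bool) : bdot a b0 = 0 := by
  simp [bdot, b0]

lemma bdot_b0' (a : Fin n → Bool) : bdot b0 a = 0 := by
  rw [bdot_comm, bdot_b0]

lemma XMat_mul (a c : Fin n → Bool) : XMat a * XMat c = XMat (bxor a c) := by
  ext s t
  have key : ∀ u : Fin n → Bool, (s = fun i => xor (a i) (u i)) ↔ u = fun i => xor (a i) (s i) := by
    intro u
    constructor <;> rintro rfl <;> funext i <;> simp
  simp only [Matrix.mul_apply, XMat, Matrix.of_apply, key, ite_mul, one_mul, zero_mul]
  rw [Finset.sum_ite_eq' Finset.univ (fun i => xor (a i) (s i))]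
  simp only [Finset.mem_univ, if_true]
  have hiff : (s = fun i => bxor a c i ^^ t i) ↔
      ((fun i => xor (a i) (s i)) = fun i => xor (c i) (t i)) := by
    constructor
    · rintro rfl; funext i; simp [bxor, Bool.xor_assoc]
    · intro h
      funext i
      have := congrFun h i
      cases ha : a i <;> cases hs : s i <;> cases hc : c i <;> cases ht : t i <;>
        simp_all [bxor]
  split_ifs with h1 h2 <;> simp_all [hiff]

lemma XMat_zero : (XMat b0 : Matrix (Fin n → Bool) (Fin n → Bool) ℂ) = 1 := by
  ext s t
  simp [XMat, b0, Matrix.one_apply, eq_comm]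

lemma XMat_invol (a : Fin n → Bool) : XMat a * XMat a = (1 : Matrix (Fin n → Bool) (Fin n → Bool) ℂ) := by
  rw [XMat_mul, bxor_self, XMat_zero]

lemma ZMat_mul (b d : Fin n → Bool) : ZMat b * ZMat d = ZMat (bxor b d) := by
  unfold ZMat
  rw [Matrix.diagonal_mul_diagonal]
  refine congrArg Matrix.diagonal ?_
  funext t
  rw [bdot_parity']

lemma ZMat_zero : (ZMat b0 : Matrix (Fin n → Bool) (Fin n → Bool) ℂ) = 1 := by
  unfold ZMat
  have : (fun t : Fin n → Bool => (-1 : ℂ) ^ bdot b0 t) = fun _ => 1 := by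
    funext t; rw [bdot_b0']; simp
  rw [this, Matrix.diagonal_one]

lemma ZMat_invol (b : Fin n → Bool) : ZMat b * ZMat b = (1 : Matrix (Fin n → Bool) (Fin n → Bool) ℂ) := by
  rw [ZMat_mul, bxor_self, ZMat_zero]

lemma ZX_swap (b a : Fin n → Bool) :
    ZMat b * XMat a = ((-1 : ℂ) ^ bdot b a) • (XMat a * ZMat b) := by
  ext s t
  simp only [ZMat, XMat, Matrix.diagonal_mul, Matrix.mul_diagonal, Matrix.smul_apply,
    Matrix.of_apply, smul_eq_mul]
  split_ifs with h
  · subst h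
    rw [mul_one]
    have : (fun i => xor (a i) (t i)) = bxor a t := rfl
    rw [this, bdot_parity]
    ring
  · ring

end Rand

namespace Rand

noncomputable def chi (m : ZMod 2) : ℂ := if m = 0 then 1 else -1

lemma chi_zero : chi 0 = 1 := by simp [chi]

lemma chi_one : chi 1 = -1 := by simp [chi]

lemma chi_add (a b : ZMod 2) : chi (a + b) = chi a * chi b := by
  rcases (by revert a; decide : ∀ x : ZMod 2, x = 0 ∨ x = 1) a with rfl | rfl <;>
    rcases (by revert b; decide : ∀ x : ZMod 2, x = 0 ∨ x = 1) b with rfl | rfl <;>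
    simp [chi, show (1 : ZMod 2) + 1 = 0 from rfl]

lemma chi_natCast (m : ℕ) : chi (m : ZMod 2) = (-1 : ℂ) ^ m := by
  induction m with
  | zero => simp [chi]
  | succ k ih =>
    push_cast
    rw [chi_add, ih, pow_succ, chi_one]

lemma star_chi (m : ZMod 2) : star (chi m) = chi m := by
  rcases (by revert m; decide : ∀ x : ZMod 2, x = 0 ∨ x = 1) m with rfl | rfl <;> simp [chi]

lemma chi_sum {ι : Type*} (s : Finset ι) (f : ι → ZMod 2) :
    chi (∑ i ∈ s, f i) = ∏ i ∈ s, chi (f i) := by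
  induction s using Finset.cons_induction with
  | empty => simp [chi]
  | cons a s ha ih => rw [Finset.sum_cons, Finset.prod_cons, chi_add, ih]

variable {n : ℕ}

noncomputable def WMat (q : (Fin n → Bool) × (Fin n → Bool)) : Matrix (Fin n → Bool) (Fin n → Bool) ℂ :=
  XMat q.1 * ZMat q.2

def pxor (p q : (Fin n → Bool) × (Fin n → Bool)) : (Fin n → Bool) × (Fin n → Bool) :=
  (bxor p.1 q.1, bxor p.2 q.2)

lemma WMat_mul (p q : (Fin n → Bool) × (Fin n → Bool)) :
    WMat p * WMat q = ((-1 : ℂ) ^ bdot p.2 q.1) • WMat (pxor p q) := by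
  unfold WMat pxor
  calc XMat p.1 * ZMat p.2 * (XMat q.1 * ZMat q.2)
      = XMat p.1 * (ZMat p.2 * XMat q.1) * ZMat q.2 := by noncomm_ring
    _ = XMat p.1 * (((-1 : ℂ) ^ bdot p.2 q.1) • (XMat q.1 * ZMat p.2)) * ZMat q.2 := by
        rw [ZX_swap]
    _ = ((-1 : ℂ) ^ bdot p.2 q.1) • (XMat p.1 * XMat q.1 * (ZMat p.2 * ZMat q.2)) := by
        simp only [Matrix.mul_smul, Matrix.smul_mul]; noncomm_ring
    _ = ((-1 : ℂ) ^ bdot p.2 q.1) • (XMat (bxor p.1 q.1) * ZMat (bxor p.2 q.2)) := by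
        rw [XMat_mul, ZMat_mul]

lemma WMat_zero : (WMat (b0, b0) : Matrix (Fin n → Bool) (Fin n → Bool) ℂ) = 1 := by
  unfold WMat
  simp [XMat_zero, ZMat_zero]

lemma WMat_mul_self (q : (Fin n → Bool) × (Fin n → Bool)) :
    WMat q * WMat q = ((-1 : ℂ) ^ bdot q.1 q.2) • (1 : Matrix (Fin n → Bool) (Fin n → Bool) ℂ) := by
  rw [WMat_mul]
  unfold pxor
  rw [bxor_self, bxor_self, WMat_zero, bdot_comm]

lemma WMat_swap (s q : (Fin n → Bool) × (Fin n → Bool)) :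
    WMat q * WMat s = chi (sympB s q) • (WMat s * WMat q) := by
  rw [WMat_mul, WMat_mul, sympB, chi_natCast]
  have hp : pxor q s = pxor s q := by
    unfold pxor; rw [bxor_comm, bxor_comm q.2 s.2]
  rw [hp, smul_smul]
  congr 1
  rw [pow_add, mul_assoc, ← pow_add]
  have heven : (-1 : ℂ) ^ (bdot s.2 q.1 + bdot s.2 q.1) = 1 :=
    Even.neg_one_pow ⟨bdot s.2 q.1, rfl⟩
  rw [heven, mul_one, bdot_comm]

end Rand

namespace Rand

variable {n : ℕ}

lemma XMat_herm (a : Fin n → Bool) : (XMat a)ᴴ = XMat a := by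
  ext s t
  simp only [Matrix.conjTranspose_apply, XMat, Matrix.of_apply]
  have : (t = fun i => xor (a i) (s i)) ↔ (s = fun i => xor (a i) (t i)) := by
    constructor <;> rintro rfl <;> funext i <;> simp
  simp only [this]
  split_ifs <;> simp

lemma ZMat_herm (b : Fin n → Bool) : (ZMat b)ᴴ = ZMat b := by
  unfold ZMat
  rw [Matrix.diagonal_conjTranspose]
  refine congrArg Matrix.diagonal ?_
  funext t
  show star ((-1:ℂ) ^ bdot b t) = _
  rw [star_pow]
  norm_num

lemma WMat_herm (q : (Fin n → Bool) × (Fin n → Bool)) :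
    (WMat q)ᴴ = ((-1 : ℂ) ^ bdot q.1 q.2) • WMat q := by
  unfold WMat
  rw [Matrix.conjTranspose_mul, XMat_herm, ZMat_herm, ZX_swap, bdot_comm]

noncomputable def PMat (q : (Fin n → Bool) × (Fin n → Bool)) :
    Matrix (Fin n → Bool) (Fin n → Bool) ℂ :=
  (Complex.I ^ bdot q.1 q.2) • WMat q

lemma PMat_herm (q : (Fin n → Bool) × (Fin n → Bool)) : (PMat q)ᴴ = PMat q := by
  unfold PMat
  rw [Matrix.conjTranspose_smul, WMat_herm, smul_smul]
  congr 1
  rw [star_pow, Complex.star_def, Complex.conj_I, ← mul_pow]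
  congr 1
  ring

lemma PMat_sq (q : (Fin n → Bool) × (Fin n → Bool)) : PMat q * PMat q = 1 := by
  unfold PMat
  rw [Matrix.smul_mul, Matrix.mul_smul, smul_smul, WMat_mul_self, smul_smul, ← mul_pow,
    Complex.I_mul_I, ← pow_add]
  have : (-1 : ℂ) ^ (bdot q.1 q.2 + bdot q.1 q.2) = 1 := Even.neg_one_pow ⟨_, rfl⟩
  rw [this, one_smul]

lemma PMat_commute {s t : (Fin n → Bool) × (Fin n → Bool)} (h : sympB s t = 0) :
    Commute (PMat s) (PMat t) := by
  unfold PMat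
  have hW : Commute (WMat s) (WMat t) := by
    unfold Commute SemiconjBy
    rw [WMat_swap s t, h, chi_zero, one_smul]
  exact (hW.smul_left _).smul_right _

lemma sq_one_pow {M : Type*} [Monoid M] {x : M} (h : x * x = 1) (m : ℕ) :
    x ^ m = x ^ (m % 2) := by
  conv_lhs => rw [← Nat.div_add_mod m 2, pow_add, pow_mul]
  rw [pow_two, h, one_pow, one_mul]

section NCP

variable {ι : Type*} [DecidableEq ι] {m : Type*} [Fintype m] [DecidableEq m]

lemma herm_noncommProd (s : Finset ι) (f : ι → Matrix m m ℂ)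
    (hf : ∀ i ∈ s, (f i)ᴴ = f i) (comm : (↑s : Set ι).Pairwise (Function.onFun Commute f)) :
    (s.noncommProd f comm)ᴴ = s.noncommProd f comm := by
  classical
  revert hf comm
  induction s using Finset.induction_on with
  | empty => intro hf comm; simp
  | @insert a s ha ih =>
    intro hf comm
    rw [Finset.noncommProd_insert_of_notMem _ _ _ _ ha, Matrix.conjTranspose_mul,
      ih (fun i hi => hf i (Finset.mem_insert_of_mem hi))
        (comm.mono (by simp [Finset.subset_insert])),
      hf a (Finset.mem_insert_self a s)]
    exact (Finset.noncommProd_commute _ _ _ _ fun x hx =>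
      comm (Finset.mem_insert_self a s) (Finset.mem_insert_of_mem hx)
        (fun hax => ha (hax ▸ hx))).eq.symm

lemma slide_noncommProd (s : Finset ι) (f : ι → Matrix m m ℂ) (A : Matrix m m ℂ)
    (c : ι → ℂ) (hslide : ∀ i ∈ s, A * f i = c i • (f i * A))
    (comm : (↑s : Set ι).Pairwise (Function.onFun Commute f)) :
    A * s.noncommProd f comm = (∏ i ∈ s, c i) • (s.noncommProd f comm * A) := by
  classical
  revert hslide comm
  induction s using Finset.induction_on with
  | empty => intro hslide comm; simp
  | @insert a s ha ih =>
    intro hslide comm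
    rw [Finset.noncommProd_insert_of_notMem _ _ _ _ ha, Finset.prod_insert ha]
    have ihs := ih (fun i hi => hslide i (Finset.mem_insert_of_mem hi))
      (comm.mono (by simp [Finset.subset_insert]))
    calc A * (f a * Finset.noncommProd s f _)
        = (A * f a) * Finset.noncommProd s f _ := by rw [mul_assoc]
      _ = (c a • (f a * A)) * Finset.noncommProd s f _ := by rw [hslide a (Finset.mem_insert_self a s)]
      _ = c a • (f a * (A * Finset.noncommProd s f _)) := by
          rw [Matrix.smul_mul, mul_assoc]
      _ = c a • (f a * ((∏ i ∈ s, c i) • (Finset.noncommProd s f _ * A))) := by rw [ihs]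
      _ = (c a * ∏ i ∈ s, c i) • (f a * Finset.noncommProd s f _ * A) := by
          rw [Matrix.mul_smul, smul_smul, mul_assoc]

end NCP

end Rand

namespace Rand

variable {n : ℕ} (g : Fin n → (Fin n → Bool) × (Fin n → Bool))

lemma zmod2_cases (x : ZMod 2) : x = 0 ∨ x = 1 := by revert x; decide

lemma zmod2_ne_zero {x : ZMod 2} (h : x ≠ 0) : x = 1 := by
  rcases zmod2_cases x with h0 | h1
  · exact absurd h0 h
  · exact h1

lemma W_mul_P_pow (q s : (Fin n → Bool) × (Fin n → Bool)) (x : ZMod 2) :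
    WMat q * PMat s ^ x.val = chi (x * sympB s q) • (PMat s ^ x.val * WMat q) := by
  have base : WMat q * PMat s = chi (sympB s q) • (PMat s * WMat q) := by
    unfold PMat
    rw [Matrix.mul_smul, Matrix.smul_mul, WMat_swap s q, smul_smul, smul_smul, mul_comm]
  rcases zmod2_cases x with rfl | rfl
  · simp [ZMod.val_zero, chi_zero]
  · simpa [ZMod.val_one, chi_one] using base

lemma WV' (q : (Fin n → Bool) × (Fin n → Bool)) :
    WMat q * (ZMat q.2 * XMat q.1) = 1 := by
  unfold WMat
  calc XMat q.1 * ZMat q.2 * (ZMat q.2 * XMat q.1)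
      = XMat q.1 * (ZMat q.2 * ZMat q.2) * XMat q.1 := by noncomm_ring
    _ = 1 := by rw [ZMat_invol, mul_one, XMat_invol]

lemma V'W (q : (Fin n → Bool) × (Fin n → Bool)) :
    (ZMat q.2 * XMat q.1) * WMat q = 1 := by
  unfold WMat
  calc ZMat q.2 * XMat q.1 * (XMat q.1 * ZMat q.2)
      = ZMat q.2 * (XMat q.1 * XMat q.1) * ZMat q.2 := by noncomm_ring
    _ = 1 := by rw [XMat_invol, mul_one, ZMat_invol]


section S

variable (hg : ∀ k l, sympB (g k) (g l) = 0)

include hg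

lemma S_pairwise (v : Fin n → ZMod 2) :
    (↑(Finset.univ : Finset (Fin n)) : Set (Fin n)).Pairwise
      (Function.onFun Commute fun k => PMat (g k) ^ (v k).val) := by
  intro k _ l _ _
  exact (PMat_commute (hg k l)).pow_pow _ _

noncomputable def SMat (v : Fin n → ZMod 2) : Matrix (Fin n → Bool) (Fin n → Bool) ℂ :=
  Finset.univ.noncommProd (fun k => PMat (g k) ^ (v k).val) (S_pairwise g hg v)

lemma S_zero : SMat g hg 0 = 1 := by
  unfold SMat
  rw [Finset.noncommProd_eq_pow_card _ _ _ 1 (fun k _ => by simp), one_pow]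

lemma S_mul (v w : Fin n → ZMod 2) : SMat g hg v * SMat g hg w = SMat g hg (v + w) := by
  unfold SMat
  rw [← Finset.noncommProd_mul_distrib _ _ (S_pairwise g hg v) (S_pairwise g hg w)
    (fun k _ l _ _ => (PMat_commute (hg k l)).pow_pow _ _)]
  refine Finset.noncommProd_congr rfl (fun k _ => ?_) _
  show PMat (g k) ^ (v k).val * PMat (g k) ^ (w k).val = PMat (g k) ^ ((v + w) k).val
  rw [← pow_add, Pi.add_apply, sq_one_pow (PMat_sq (g k)) ((v k).val + (w k).val),
    sq_one_pow (PMat_sq (g k)) ((v k + w k).val), ZMod.val_add]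
  simp

lemma S_herm (v : Fin n → ZMod 2) : (SMat g hg v)ᴴ = SMat g hg v := by
  unfold SMat
  exact herm_noncommProd _ _ (fun k _ => by rw [Matrix.conjTranspose_pow, PMat_herm]) _

lemma W_slide_S (q : (Fin n → Bool) × (Fin n → Bool)) (v : Fin n → ZMod 2) :
    WMat q * SMat g hg v = chi (∑ k, v k * sympB (g k) q) • (SMat g hg v * WMat q) := by
  unfold SMat
  rw [chi_sum]
  exact slide_noncommProd _ _ _ _ (fun k _ => W_mul_P_pow q (g k) (v k)) _

lemma conj_S (q : (Fin n → Bool) × (Fin n → Bool)) (v : Fin n → ZMod 2) :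
    WMat q * SMat g hg v * (ZMat q.2 * XMat q.1)
      = chi (∑ k, v k * sympB (g k) q) • SMat g hg v := by
  rw [W_slide_S g hg q v, Matrix.smul_mul, mul_assoc, WV', mul_one]

end S

end Rand

namespace Rand

variable {n : ℕ} (g : Fin n → (Fin n → Bool) × (Fin n → Bool))

lemma zmod2_add_eq_zero (a b : ZMod 2) : a + b = 0 ↔ a = b := by revert a b; decide

lemma bdot_ej (a : Fin n → Bool) (j : Fin n) :
    bdot a (fun i => decide (i = j)) = if a j = true then 1 else 0 := by
  unfold bdot
  have h : (Finset.univ.filter fun i => a i = true ∧ (decide (i = j)) = true)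
      = if a j = true then {j} else ∅ := by
    split_ifs with h
    · ext i
      simp only [Finset.mem_filter, Finset.mem_univ, true_and, decide_eq_true_eq,
        Finset.mem_singleton]
      constructor
      · rintro ⟨_, rfl⟩; rfl
      · rintro rfl; exact ⟨h, rfl⟩
    · ext i
      simp only [Finset.mem_filter, Finset.mem_univ, true_and, decide_eq_true_eq,
        Finset.notMem_empty, iff_false, not_and]
      rintro ha rfl; exact h ha
  rw [h]
  split_ifs <;> simp

lemma sympB_e1 (p : (Fin n → Bool) × (Fin n → Bool)) (j : Fin n) :
    sympB p (b0, fun i => decide (i = j)) = (toRow p).1 j := by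
  unfold sympB toRow
  rw [bdot_b0]
  simp only [add_zero]
  rw [bdot_ej]
  split_ifs <;> simp

lemma sympB_e2 (p : (Fin n → Bool) × (Fin n → Bool)) (j : Fin n) :
    sympB p ((fun i => decide (i = j)), b0) = (toRow p).2 j := by
  unfold sympB toRow
  rw [bdot_b0]
  simp only [zero_add]
  rw [bdot_ej]
  split_ifs <;> simp

lemma exists_q (hindep : LinearIndependent (ZMod 2) fun k => toRow (g k))
    (v : Fin n → ZMod 2) (hv : v ≠ 0) :
    ∃ q : (Fin n → Bool) × (Fin n → Bool), (∑ k, v k * sympB (g k) q) = 1 := by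
  have hne : (∑ k, v k • toRow (g k)) ≠ 0 := by
    intro h0
    apply hv
    funext k
    exact (Fintype.linearIndependent_iff.mp hindep v h0) k
  have hcomp : (∑ k, v k • toRow (g k)).1 ≠ 0 ∨ (∑ k, v k • toRow (g k)).2 ≠ 0 := by
    by_contra hcon
    push_neg at hcon
    exact hne (Prod.ext hcon.1 hcon.2)
  rcases hcomp with h1 | h2
  · obtain ⟨j, hj⟩ := Function.ne_iff.mp h1
    refine ⟨(b0, fun i => decide (i = j)), ?_⟩
    have : ∀ k, v k * sympB (g k) (b0, fun i => decide (i = j)) = v k * (toRow (g k)).1 j :=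
      fun k => by rw [sympB_e1]
    rw [Finset.sum_congr rfl fun k _ => this k]
    apply zmod2_ne_zero
    have : (∑ k, v k • toRow (g k)).1 j = ∑ k, v k * (toRow (g k)).1 j := by
      rw [Prod.fst_sum]
      rw [Finset.sum_apply]
      refine Finset.sum_congr rfl fun k _ => ?_
      simp [Prod.smul_fst]
    rw [← this]
    simpa using hj
  · obtain ⟨j, hj⟩ := Function.ne_iff.mp h2
    refine ⟨((fun i => decide (i = j)), b0), ?_⟩
    have : ∀ k, v k * sympB (g k) ((fun i => decide (i = j)), b0) = v k * (toRow (g k)).2 j :=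
      fun k => by rw [sympB_e2]
    rw [Finset.sum_congr rfl fun k _ => this k]
    apply zmod2_ne_zero
    have : (∑ k, v k • toRow (g k)).2 j = ∑ k, v k * (toRow (g k)).2 j := by
      rw [Prod.snd_sum]
      rw [Finset.sum_apply]
      refine Finset.sum_congr rfl fun k _ => ?_
      simp [Prod.smul_snd]
    rw [← this]
    simpa using hj

section S2

variable (hg : ∀ k l, sympB (g k) (g l) = 0)

include hg

lemma trace_S (hindep : LinearIndependent (ZMod 2) fun k => toRow (g k))
    (v : Fin n → ZMod 2) :
    (SMat g hg v).trace = if v = 0 then (2 : ℂ) ^ n else 0 := by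
  split_ifs with h
  · subst h
    rw [S_zero, Matrix.trace_one]
    simp [Fintype.card_fun]
  · obtain ⟨q, hq⟩ := exists_q g hindep v h
    have h1 := conj_S g hg q v
    rw [hq, chi_one] at h1
    have h2 : (WMat q * SMat g hg v * (ZMat q.2 * XMat q.1)).trace = (SMat g hg v).trace := by
      rw [Matrix.trace_mul_cycle, V'W, one_mul]
    rw [h1] at h2
    have h3 : ((-1 : ℂ) • SMat g hg v).trace = -(SMat g hg v).trace := by
      rw [Matrix.trace_smul]; simp
    rw [h3] at h2
    have : (2 : ℂ) * (SMat g hg v).trace = 0 := by linear_combination -h2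
    rcases mul_eq_zero.mp this with h4 | h4
    · norm_num at h4
    · exact h4

end S2

lemma chi_orth (z : Fin n → ZMod 2) :
    (∑ v : Fin n → ZMod 2, chi (∑ k, z k * v k)) = if z = 0 then (2 : ℂ) ^ n else 0 := by
  have h1 : ∀ v : Fin n → ZMod 2, chi (∑ k, z k * v k) = ∏ k, chi (z k * v k) :=
    fun v => chi_sum _ _
  rw [Finset.sum_congr rfl fun v _ => h1 v]
  rw [← Fintype.piFinset_univ, ← Finset.prod_univ_sum (fun _ => Finset.univ) (fun k y => chi (z k * y))]
  have h2 : ∀ w : ZMod 2, (∑ y : ZMod 2, chi (w * y)) = if w = 0 then 2 else 0 := by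
    intro w
    have huniv : (Finset.univ : Finset (ZMod 2)) = {0, 1} := by decide
    rcases zmod2_cases w with rfl | rfl
    · simp [chi_zero, huniv]
    · rw [huniv, Finset.sum_pair (by decide)]
      simp [chi_zero, chi_one]
  rw [Finset.prod_congr rfl fun k _ => h2 (z k)]
  by_cases hz : z = 0
  · subst hz
    simp
  · obtain ⟨k, hk⟩ := Function.ne_iff.mp hz
    rw [if_neg hz]
    refine Finset.prod_eq_zero (Finset.mem_univ k) ?_
    rw [if_neg (by simpa using hk)]

end Rand

namespace Rand

variable {n : ℕ} (g : Fin n → (Fin n → Bool) × (Fin n → Bool))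
variable (hg : ∀ k l, sympB (g k) (g l) = 0)

noncomputable def PiMat (x : Fin n → ZMod 2) : Matrix (Fin n → Bool) (Fin n → Bool) ℂ :=
  ((2 : ℂ) ^ n)⁻¹ • ∑ v, chi (∑ k, x k * v k) • SMat g hg v

lemma two_pow_ne : ((2 : ℂ) ^ n) ≠ 0 := pow_ne_zero _ two_ne_zero

lemma trace_Pi (hindep : LinearIndependent (ZMod 2) fun k => toRow (g k))
    (x : Fin n → ZMod 2) : (PiMat g hg x).trace = 1 := by
  unfold PiMat
  rw [Matrix.trace_smul, Matrix.trace_sum]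
  have h1 : ∀ v : Fin n → ZMod 2,
      (chi (∑ k, x k * v k) • SMat g hg v).trace = if v = 0 then (2 : ℂ) ^ n else 0 := by
    intro v
    rw [Matrix.trace_smul, trace_S g hg hindep v, smul_eq_mul]
    split_ifs with h
    · subst h; simp [chi_zero]
    · rw [mul_zero]
  rw [Finset.sum_congr rfl fun v _ => h1 v, Finset.sum_ite_eq' Finset.univ 0 fun _ => (2:ℂ)^n]
  simp [inv_mul_cancel₀ (two_pow_ne (n := n))]

lemma funadd_eq_zero_iff (x y : Fin n → ZMod 2) : (fun k => x k + y k) = 0 ↔ x = y := by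
  rw [funext_iff, funext_iff]
  exact forall_congr' fun k => by rw [Pi.zero_apply, zmod2_add_eq_zero]

lemma chi_bilin_add (y v u : Fin n → ZMod 2) :
    chi (∑ k, y k * (v + u) k) = chi (∑ k, y k * v k) * chi (∑ k, y k * u k) := by
  rw [← chi_add]
  congr 1
  rw [← Finset.sum_add_distrib]
  exact Finset.sum_congr rfl fun k _ => by rw [Pi.add_apply, mul_add]

lemma chi_bilin_sum (x y v : Fin n → ZMod 2) :
    chi (∑ k, x k * v k) * chi (∑ k, y k * v k) = chi (∑ k, (x k + y k) * v k) := by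
  rw [← chi_add]
  congr 1
  rw [← Finset.sum_add_distrib]
  exact Finset.sum_congr rfl fun k _ => by rw [add_mul]

lemma Pi_mul (x y : Fin n → ZMod 2) :
    PiMat g hg x * PiMat g hg y = if x = y then PiMat g hg x else 0 := by
  unfold PiMat
  rw [Matrix.smul_mul, Matrix.mul_smul, smul_smul, Finset.sum_mul_sum]
  have key : ∀ v w : Fin n → ZMod 2,
      (chi (∑ k, x k * v k) • SMat g hg v) * (chi (∑ k, y k * w k) • SMat g hg w)
        = (chi (∑ k, x k * v k) * chi (∑ k, y k * w k)) • SMat g hg (v + w) := by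
    intro v w
    rw [Matrix.smul_mul, Matrix.mul_smul, smul_smul, S_mul]
  rw [Finset.sum_congr rfl fun v _ => Finset.sum_congr rfl fun w _ => key v w]
  have reidx : ∀ v : Fin n → ZMod 2,
      (∑ w, (chi (∑ k, x k * v k) * chi (∑ k, y k * w k)) • SMat g hg (v + w))
        = ∑ u, (chi (∑ k, x k * v k) * (chi (∑ k, y k * v k) * chi (∑ k, y k * u k))) • SMat g hg u := by
    intro v
    rw [← Equiv.sum_comp (Equiv.addLeft v)
      (fun w => (chi (∑ k, x k * v k) * chi (∑ k, y k * w k)) • SMat g hg (v + w))]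
    refine Finset.sum_congr rfl fun u _ => ?_
    have h1 : (Equiv.addLeft v) u = v + u := rfl
    have h2 : v + (v + u) = u := by
      rw [← add_assoc]
      have : v + v = 0 := funext fun k => (zmod2_add_eq_zero (v k) (v k)).mpr rfl
      rw [this, zero_add]
    rw [h1, chi_bilin_add, h2]
  rw [Finset.sum_congr rfl fun v _ => reidx v, Finset.sum_comm]
  have hsum : ∀ u : Fin n → ZMod 2,
      (∑ v : Fin n → ZMod 2, (chi (∑ k, x k * v k) * (chi (∑ k, y k * v k) * chi (∑ k, y k * u k))) • SMat g hg u)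
        = ((if (fun k => x k + y k) = (0 : Fin n → ZMod 2) then (2 : ℂ) ^ n else 0)
            * chi (∑ k, y k * u k)) • SMat g hg u := by
    intro u
    rw [← Finset.sum_smul]
    congr 1
    have : ∀ v : Fin n → ZMod 2,
        chi (∑ k, x k * v k) * (chi (∑ k, y k * v k) * chi (∑ k, y k * u k))
          = chi (∑ k, (x k + y k) * v k) * chi (∑ k, y k * u k) := by
      intro v
      rw [← mul_assoc, chi_bilin_sum]
    rw [Finset.sum_congr rfl fun v _ => this v, ← Finset.sum_mul, chi_orth]
  rw [Finset.sum_congr rfl fun u _ => hsum u]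
  rcases eq_or_ne x y with rfl | hxy
  · rw [if_pos rfl, if_pos (by funext k; exact (zmod2_add_eq_zero (x k) (x k)).mpr rfl)]
    have : ∀ u : Fin n → ZMod 2,
        (((2 : ℂ) ^ n) * chi (∑ k, x k * u k)) • SMat g hg u
          = ((2 : ℂ) ^ n) • (chi (∑ k, x k * u k) • SMat g hg u) := fun u => by
      rw [smul_smul]
    rw [Finset.sum_congr rfl fun u _ => this u, ← Finset.smul_sum, smul_smul]
    congr 1
    field_simp
  · rw [if_neg hxy, if_neg (fun h => hxy ((funadd_eq_zero_iff x y).mp h))]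
    have : ∀ u : Fin n → ZMod 2,
        ((0 : ℂ) * chi (∑ k, y k * u k)) • SMat g hg u = 0 := fun u => by
      rw [zero_mul, zero_smul]
    rw [Finset.sum_congr rfl fun u _ => this u, Finset.sum_const, smul_zero, smul_zero]

lemma Pi_herm (x : Fin n → ZMod 2) : (PiMat g hg x)ᴴ = PiMat g hg x := by
  unfold PiMat
  rw [Matrix.conjTranspose_smul, Matrix.conjTranspose_sum]
  congr 1
  · simp
  · refine Finset.sum_congr rfl fun v _ => ?_
    rw [Matrix.conjTranspose_smul, star_chi, S_herm]

lemma Pi_psd (x : Fin n → ZMod 2) : (PiMat g hg x).PosSemidef := by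
  have h := Matrix.posSemidef_conjTranspose_mul_self (PiMat g hg x)
  rwa [Pi_herm, Pi_mul, if_pos rfl] at h

lemma sum_Pi : (∑ x, PiMat g hg x) = 1 := by
  unfold PiMat
  rw [← Finset.smul_sum, Finset.sum_comm]
  have h1 : ∀ v : Fin n → ZMod 2,
      (∑ x : Fin n → ZMod 2, chi (∑ k, x k * v k) • SMat g hg v)
        = (if v = 0 then (2 : ℂ) ^ n else 0) • SMat g hg v := by
    intro v
    rw [← Finset.sum_smul]
    congr 1
    have : ∀ x : Fin n → ZMod 2, chi (∑ k, x k * v k) = chi (∑ k, v k * x k) := fun x =>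
      congrArg chi (Finset.sum_congr rfl fun k _ => mul_comm _ _)
    rw [Finset.sum_congr rfl fun x _ => this x, chi_orth]
  rw [Finset.sum_congr rfl fun v _ => h1 v]
  have h2 : ∀ v : Fin n → ZMod 2,
      (if v = 0 then (2 : ℂ) ^ n else 0) • SMat g hg v
        = if v = 0 then ((2 : ℂ) ^ n) • SMat g hg 0 else 0 := by
    intro v
    split_ifs with h
    · subst h; rfl
    · rw [zero_smul]
  rw [Finset.sum_congr rfl fun v _ => h2 v, Finset.sum_ite_eq' Finset.univ 0]
  simp only [Finset.mem_univ, if_true]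
  rw [S_zero, smul_smul]
  rw [inv_mul_cancel₀ (two_pow_ne (n := n)), one_smul]

lemma conj_Pi (q : (Fin n → Bool) × (Fin n → Bool)) :
    WMat q * PiMat g hg 0 * (ZMat q.2 * XMat q.1) = PiMat g hg (Msymp g q) := by
  unfold PiMat
  rw [Matrix.mul_smul, Matrix.smul_mul]
  congr 1
  rw [Finset.mul_sum, Finset.sum_mul]
  refine Finset.sum_congr rfl fun v _ => ?_
  have h0 : chi (∑ k, (0 : Fin n → ZMod 2) k * v k) = 1 := by
    simp [chi_zero]
  rw [h0, one_smul]
  have : WMat q * SMat g hg v * (ZMat q.2 * XMat q.1)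
      = chi (∑ k, v k * sympB (g k) q) • SMat g hg v := conj_S g hg q v
  rw [this]
  congr 1
  refine congrArg chi (Finset.sum_congr rfl fun k _ => ?_)
  rw [Msymp, mul_comm]

end Rand

namespace Rand

variable {m : Type*} [Fintype m] [DecidableEq m]

lemma psd_diag_entry {M : Matrix m m ℂ} (hM : M.PosSemidef) (j : m) :
    0 ≤ (M j j).re ∧ (M j j).im = 0 := by
  have h := hM.dotProduct_mulVec_nonneg (Pi.single j 1)
  have hval : (star (Pi.single j 1) : m → ℂ) ⬝ᵥ (M *ᵥ Pi.single j 1) = M j j := by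
    have hs : (star (Pi.single j 1) : m → ℂ) = Pi.single j 1 := by
      funext i
      by_cases h : i = j
      · subst h; simp
      · simp [Pi.single_eq_of_ne h]
    rw [hs]
    simp [Matrix.mulVec_single, single_dotProduct]
  rw [hval] at h
  have := Complex.nonneg_iff.mp h
  exact ⟨this.1, this.2.symm⟩

open scoped MatrixOrder in
lemma traceNorm_eq {A : Matrix m m ℂ} (hA : A.IsHermitian) :
    traceNorm A = ∑ i, |hA.eigenvalues i| := by
  classical
  set U : Matrix m m ℂ := (Matrix.IsHermitian.eigenvectorUnitary hA : Matrix m m ℂ) with hU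
  have hUmem := (Matrix.IsHermitian.eigenvectorUnitary hA).2
  have hU2 : star U * U = 1 := (Matrix.mem_unitaryGroup_iff').mp hUmem
  set d : m → ℝ := hA.eigenvalues with hd
  have spec : A = U * Matrix.diagonal (RCLike.ofReal ∘ d) * star U := hA.spectral_theorem
  have hmul : ∀ f f' : m → ℂ, (U * Matrix.diagonal f * star U) * (U * Matrix.diagonal f' * star U)
      = U * Matrix.diagonal (fun i => f i * f' i) * star U := by
    intro f f'
    have h1 : U * Matrix.diagonal f * star U * (U * Matrix.diagonal f' * star U)
        = U * Matrix.diagonal f * (star U * U) * Matrix.diagonal f' * star U := by noncomm_ring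
    rw [h1, hU2, mul_one, mul_assoc U (Matrix.diagonal f) (Matrix.diagonal f'),
      Matrix.diagonal_mul_diagonal]
  set B : Matrix m m ℂ := U * Matrix.diagonal (fun i => ((|d i| : ℝ) : ℂ)) * star U with hB
  have hBpsd : B.PosSemidef := by
    have hdpsd : (Matrix.diagonal (fun i => ((|d i| : ℝ) : ℂ))).PosSemidef :=
      Matrix.posSemidef_diagonal_iff.mpr fun i => Complex.zero_le_real.mpr (abs_nonneg _)
    have h2 := hdpsd.mul_mul_conjTranspose_same U
    rw [hB, Matrix.star_eq_conjTranspose]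
    exact h2
  have hBsq : B ^ 2 = Aᴴ * A := by
    rw [hA.eq, pow_two, hB]
    conv_rhs => rw [spec]
    rw [hmul, hmul]
    have heq : (fun i => ((|d i| : ℝ) : ℂ) * ((|d i| : ℝ) : ℂ))
        = fun i => (RCLike.ofReal ∘ d) i * (RCLike.ofReal ∘ d) i := by
      funext i
      show ((|d i| : ℝ) : ℂ) * ((|d i| : ℝ) : ℂ) = ((d i : ℝ) : ℂ) * ((d i : ℝ) : ℂ)
      rw [← Complex.ofReal_mul, ← Complex.ofReal_mul, abs_mul_abs_self]
    rw [heq]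
  have hsqrt : B = CFC.sqrt (Aᴴ * A) :=
    (CFC.sqrt_unique (by rw [← pow_two]; exact hBsq) hBpsd.nonneg).symm
  have htn : traceNorm A = (CFC.sqrt (Aᴴ * A)).trace.re := by
    rw [CFC.sqrt_eq_real_sqrt _ (Matrix.posSemidef_conjTranspose_mul_self A).nonneg,
      cfcₙ_eq_cfc (hf0 := Real.sqrt_zero), (Matrix.posSemidef_conjTranspose_mul_self A).1.cfc_eq]
    rfl
  rw [htn, ← hsqrt, hB]
  rw [Matrix.trace_mul_cycle, hU2, one_mul, Matrix.trace_diagonal]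
  rw [← Complex.ofReal_sum]
  rw [Complex.ofReal_re]

lemma pinching_bound {A : Matrix m m ℂ} (hA : A.IsHermitian)
    {ι : Type*} [Fintype ι] (Q : ι → Matrix m m ℂ)
    (hQ : ∀ i, (Q i).PosSemidef) (hQ1 : (∑ i, Q i) = 1) :
    ∑ i, |((Q i * A).trace).re| ≤ traceNorm A := by
  classical
  set U : Matrix m m ℂ := (Matrix.IsHermitian.eigenvectorUnitary hA : Matrix m m ℂ) with hU
  have hUmem := (Matrix.IsHermitian.eigenvectorUnitary hA).2
  have hU2 : star U * U = 1 := (Matrix.mem_unitaryGroup_iff').mp hUmem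
  set d : m → ℝ := hA.eigenvalues with hd
  have spec : A = U * Matrix.diagonal (RCLike.ofReal ∘ d) * star U := hA.spectral_theorem
  set B : ι → Matrix m m ℂ := fun i => star U * Q i * U with hBdef
  have hBpsd : ∀ i, (B i).PosSemidef := by
    intro i
    have h2 := (hQ i).conjTranspose_mul_mul_same U
    rw [hBdef, Matrix.star_eq_conjTranspose]
    exact h2
  have htr : ∀ i, (Q i * A).trace = ∑ j, B i j j * ((d j : ℝ) : ℂ) := by
    intro i
    conv_lhs => rw [spec]
    have h1 : Q i * (U * Matrix.diagonal (RCLike.ofReal ∘ d) * star U)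
        = (Q i * U * Matrix.diagonal (RCLike.ofReal ∘ d)) * star U := by noncomm_ring
    rw [h1, Matrix.trace_mul_comm]
    have h2 : star U * (Q i * U * Matrix.diagonal (RCLike.ofReal ∘ d))
        = (B i) * Matrix.diagonal (RCLike.ofReal ∘ d) := by
      rw [hBdef]; noncomm_ring
    rw [h2, Matrix.trace]
    refine Finset.sum_congr rfl fun j _ => ?_
    rw [Matrix.diag_apply, Matrix.mul_diagonal]
    rfl
  have hre : ∀ i, ((Q i * A).trace).re = ∑ j, (B i j j).re * d j := by
    intro i
    rw [htr i, Complex.re_sum]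
    refine Finset.sum_congr rfl fun j _ => ?_
    rw [Complex.mul_re, Complex.ofReal_re, Complex.ofReal_im, mul_zero, sub_zero]
  have habs : ∀ i, |((Q i * A).trace).re| ≤ ∑ j, (B i j j).re * |d j| := by
    intro i
    rw [hre i]
    refine (Finset.abs_sum_le_sum_abs _ _).trans ?_
    refine Finset.sum_le_sum fun j _ => ?_
    rw [abs_mul, abs_of_nonneg (psd_diag_entry (hBpsd i) j).1]
  refine (Finset.sum_le_sum fun i _ => habs i).trans ?_
  rw [Finset.sum_comm]
  have hsum1 : (∑ i, B i) = 1 := by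
    rw [hBdef, ← Finset.sum_mul, ← Finset.mul_sum, hQ1, mul_one, hU2]
  have hsumB : ∀ j, (∑ i, (B i j j).re) = 1 := by
    intro j
    have e1 : (∑ i, (B i j j).re) = ((∑ i, B i) j j).re := by
      rw [Matrix.sum_apply, Complex.re_sum]
    rw [e1, hsum1, Matrix.one_apply_eq]
    rfl
  have e2 : ∀ j, (∑ i, (B i j j).re * |d j|) = |d j| := by
    intro j
    rw [← Finset.sum_mul, hsumB j, one_mul]
  rw [Finset.sum_congr rfl fun j _ => e2 j, traceNorm_eq hA]

end Rand

theorem randomizing_implies_syndrome_close_to_uniform (n : ℕ) (ε : ℝ)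
    (p : (Fin n → Bool) × (Fin n → Bool) → ℝ)
    (hp0 : ∀ ab, 0 ≤ p ab) (hp1 : ∑ ab, p ab = 1)
    (hrand : ∀ ρ : Matrix (Fin n → Bool) (Fin n → Bool) ℂ, ρ.PosSemidef → ρ.trace = 1 →
      traceNorm ((∑ ab : (Fin n → Bool) × (Fin n → Bool),
          (p ab : ℂ) • (XMat ab.1 * ZMat ab.2 * ρ * (ZMat ab.2 * XMat ab.1)))
        - ((2 : ℂ) ^ n)⁻¹ • 1) ≤ ε)
    (g : Fin n → (Fin n → Bool) × (Fin n → Bool))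
    (hcomm : ∀ k l, sympB (g k) (g l) = 0)
    (hindep : LinearIndependent (ZMod 2) fun k => toRow (g k)) :
    ∑ x : Fin n → ZMod 2,
        |(∑ ab ∈ Finset.univ.filter fun ab => Msymp g ab = x, p ab) - ((2 : ℝ) ^ n)⁻¹|
      ≤ ε := by
  classical
  have hρ := hrand (Rand.PiMat g hcomm 0) (Rand.Pi_psd g hcomm 0)
    (Rand.trace_Pi g hcomm hindep 0)
  have hconj : ∀ ab : (Fin n → Bool) × (Fin n → Bool),
      XMat ab.1 * ZMat ab.2 * Rand.PiMat g hcomm 0 * (ZMat ab.2 * XMat ab.1)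
        = Rand.PiMat g hcomm (Msymp g ab) := fun ab => Rand.conj_Pi g hcomm ab
  have hsum_eq : (∑ ab : (Fin n → Bool) × (Fin n → Bool),
        (p ab : ℂ) • (XMat ab.1 * ZMat ab.2 * Rand.PiMat g hcomm 0 * (ZMat ab.2 * XMat ab.1)))
      = ∑ ab : (Fin n → Bool) × (Fin n → Bool),
        (p ab : ℂ) • Rand.PiMat g hcomm (Msymp g ab) :=
    Finset.sum_congr rfl fun ab _ => by rw [hconj ab]
  rw [hsum_eq] at hρ
  have hAH : ((∑ ab : (Fin n → Bool) × (Fin n → Bool),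
        (p ab : ℂ) • Rand.PiMat g hcomm (Msymp g ab)) - ((2 : ℂ) ^ n)⁻¹ • 1).IsHermitian := by
    show _ᴴ = _
    rw [Matrix.conjTranspose_sub, Matrix.conjTranspose_sum, Matrix.conjTranspose_smul,
      Matrix.conjTranspose_one]
    congr 1
    · refine Finset.sum_congr rfl fun ab _ => ?_
      rw [Matrix.conjTranspose_smul, Rand.Pi_herm]
      congr 1
      rw [Complex.star_def, Complex.conj_ofReal]
    · congr 1
      simp
  have key : ∀ x : Fin n → ZMod 2,
      ((Rand.PiMat g hcomm x * ((∑ ab : (Fin n → Bool) × (Fin n → Bool),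
            (p ab : ℂ) • Rand.PiMat g hcomm (Msymp g ab)) - ((2 : ℂ) ^ n)⁻¹ • 1)).trace).re
        = (∑ ab ∈ Finset.univ.filter fun ab => Msymp g ab = x, p ab) - ((2 : ℝ) ^ n)⁻¹ := by
    intro x
    have t1 : (Rand.PiMat g hcomm x * ((∑ ab : (Fin n → Bool) × (Fin n → Bool),
            (p ab : ℂ) • Rand.PiMat g hcomm (Msymp g ab)) - ((2 : ℂ) ^ n)⁻¹ • 1)).trace
        = (((∑ ab ∈ Finset.univ.filter fun ab => Msymp g ab = x, p ab) - ((2 : ℝ) ^ n)⁻¹ : ℝ) : ℂ) := by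
      rw [mul_sub, Matrix.trace_sub]
      have e1 : Rand.PiMat g hcomm x * (∑ ab : (Fin n → Bool) × (Fin n → Bool),
            (p ab : ℂ) • Rand.PiMat g hcomm (Msymp g ab))
          = ∑ ab : (Fin n → Bool) × (Fin n → Bool),
            (p ab : ℂ) • (Rand.PiMat g hcomm x * Rand.PiMat g hcomm (Msymp g ab)) := by
        rw [Finset.mul_sum]
        exact Finset.sum_congr rfl fun ab _ => (mul_smul_comm _ _ _)
      rw [e1, Matrix.trace_sum]
      have e2 : ∀ ab : (Fin n → Bool) × (Fin n → Bool),
          ((p ab : ℂ) • (Rand.PiMat g hcomm x * Rand.PiMat g hcomm (Msymp g ab))).trace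
            = (p ab : ℂ) * (if Msymp g ab = x then 1 else 0) := by
        intro ab
        rw [Matrix.trace_smul, Rand.Pi_mul, smul_eq_mul]
        by_cases h : x = Msymp g ab
        · rw [if_pos h, if_pos h.symm, Rand.trace_Pi g hcomm hindep]
        · rw [if_neg h, if_neg (fun hh => h hh.symm), Matrix.trace_zero]
      have e3 : Rand.PiMat g hcomm x * (((2 : ℂ) ^ n)⁻¹ • 1)
          = ((2 : ℂ) ^ n)⁻¹ • Rand.PiMat g hcomm x := by
        rw [mul_smul_comm, mul_one]
      rw [Finset.sum_congr rfl fun ab _ => e2 ab, e3, Matrix.trace_smul,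
        Rand.trace_Pi g hcomm hindep, smul_eq_mul, mul_one]
      push_cast
      congr 1
      rw [Finset.sum_filter]
      push_cast
      refine Finset.sum_congr rfl fun ab _ => ?_
      split_ifs with h
      · rw [mul_one]
      · rw [mul_zero]
    rw [t1, Complex.ofReal_re]
  have hpin := Rand.pinching_bound hAH (Rand.PiMat g hcomm)
    (Rand.Pi_psd g hcomm) (Rand.sum_Pi g hcomm)
  calc ∑ x : Fin n → ZMod 2,
        |(∑ ab ∈ Finset.univ.filter fun ab => Msymp g ab = x, p ab) - ((2 : ℝ) ^ n)⁻¹|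
      = ∑ x : Fin n → ZMod 2,
        |((Rand.PiMat g hcomm x * ((∑ ab : (Fin n → Bool) × (Fin n → Bool),
            (p ab : ℂ) • Rand.PiMat g hcomm (Msymp g ab)) - ((2 : ℂ) ^ n)⁻¹ • 1)).trace).re| := by
        refine Finset.sum_congr rfl fun x _ => ?_
        rw [key x]
    _ ≤ traceNorm ((∑ ab : (Fin n → Bool) × (Fin n → Bool),
          (p ab : ℂ) • Rand.PiMat g hcomm (Msymp g ab)) - ((2 : ℂ) ^ n)⁻¹ • 1) := hpin
    _ ≤ ε := hρ
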